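/- Let f : [a,b] → ℝ be continuous. If for every x ∈ (a,b) at least one of the one-sided derivatives f′(x⁺) or f′(x⁻) exists (possibly +∞) and is nonnegative, then f is monotone increasing on [a,b]. -/

import Mathlib

open Set Filter Topology

theorem stmt_9 (a b : ℝ) (hab : a < b) (f : ℝ → ℝ)
    (hf : ContinuousOn f (Set.Icc a b))
    (hder : ∀ x ∈ Set.Ioo a b,
      (∃ l : EReal, 0 ≤ l ∧
        Filter.Tendsto (fun t : ℝ => ((f t - f x) / (t - x) : EReal))
          (nhdsWithin x (Set.Ioi x)) (nhds l)) ∨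
      (∃ l : EReal, 0 ≤ l ∧
        Filter.Tendsto (fun t : ℝ => ((f t - f x) / (t - x) : EReal))
          (nhdsWithin x (Set.Iio x)) (nhds l))) :
    MonotoneOn f (Set.Icc a b) := by
  have key : ∀ ε : ℝ, 0 < ε → ∀ x ∈ Icc a b, ∀ y ∈ Icc a b, x < y →
      f x + ε * x ≤ f y + ε * y := by
    intro ε hε x hx y hy hxy
    by_contra hcon
    push_neg at hcon
    set g : ℝ → ℝ := fun t => f t + ε * t with hgdef
    have hgyx : g y < g x := hcon
    have hgc : ContinuousOn g (Icc a b) :=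
      hf.add ((continuousOn_const).mul continuousOn_id)
    have hsub : Icc x y ⊆ Icc a b := Icc_subset_Icc hx.1 hy.2
    have main : ∀ c ∈ Ioo (g y) (g x), ∃ q : ℚ, ∃ z u : ℝ,
        u < (q : ℝ) ∧ (q : ℝ) < z ∧ x < z ∧ z < y ∧ g z = c ∧
        (∀ t, u < t → t < z → g t < c) ∧ (∀ t, z < t → t ≤ y → g t < c) := by
      intro c hc
      set S : Set ℝ := Icc x y ∩ g ⁻¹' (Ici c) with hSdef
      have hSclosed : IsClosed S :=
        (hgc.mono hsub).preimage_isClosed_of_isClosed isClosed_Icc isClosed_Ici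
      have hSne : S.Nonempty := ⟨x, ⟨le_refl x, hxy.le⟩, hc.2.le⟩
      have hSbdd : BddAbove S := ⟨y, fun t ht => ht.1.2⟩
      set z := sSup S with hzdef
      have hzS : z ∈ S := hSclosed.csSup_mem hSne hSbdd
      have hzx : x ≤ z := hzS.1.1
      have hzy : z ≤ y := hzS.1.2
      have hgzc : c ≤ g z := hzS.2
      have hzlty : z < y := by
        rcases lt_or_eq_of_le hzy with h | h
        · exact h
        · exfalso; rw [h] at hgzc; exact absurd hgzc (not_le.2 hc.1)
      have hgt : ∀ t, z < t → t ≤ y → g t < c := by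
        intro t h1 h2
        by_contra h; push_neg at h
        have ht : t ∈ S := ⟨⟨hzx.trans h1.le, h2⟩, h⟩
        exact absurd (le_csSup hSbdd ht) (not_le.2 h1)
      have hzab : z ∈ Icc a b := hsub ⟨hzx, hzy⟩
      -- g z ≤ c by right continuity
      have hIoosub : Ioo z y ⊆ Icc a b := fun t ht =>
        ⟨hx.1.trans (hzx.trans ht.1.le), ht.2.le.trans hy.2⟩
      have hcw : ContinuousWithinAt g (Ioo z y) z :=
        (hgc z hzab).mono hIoosub
      have hfilt : 𝓝[Ioo z y] z = 𝓝[>] z := nhdsWithin_Ioo_eq_nhdsGT hzlty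
      have hglec : g z ≤ c := by
        haveI : (𝓝[Ioo z y] z).NeBot := by rw [hfilt]; infer_instance
        refine le_of_tendsto hcw ?_
        filter_upwards [self_mem_nhdsWithin] with t ht
        exact (hgt t ht.1 ht.2.le).le
      have hgz : g z = c := le_antisymm hglec hgzc
      have hxltz : x < z := by
        rcases lt_or_eq_of_le hzx with h | h
        · exact h
        · exfalso; rw [← h] at hgz; exact absurd hgz.symm (ne_of_lt hc.2)
      have hzIoo : z ∈ Ioo a b := ⟨lt_of_le_of_lt hx.1 hxltz, lt_of_lt_of_le hzlty hy.2⟩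
      rcases hder z hzIoo with ⟨l, hl0, hlim⟩ | ⟨l, hl0, hlim⟩
      · -- right derivative exists: contradiction
        exfalso
        have hev : ∀ᶠ t in 𝓝[>] z, ((f t - f z) / (t - z) : EReal) ≤ ((-ε : ℝ) : EReal) := by
          filter_upwards [Ioo_mem_nhdsGT_of_mem (⟨le_refl z, hzlty⟩ : z ∈ Ico z y)] with t ht
          have h1 : g t < c := hgt t ht.1 ht.2.le
          have htz : (0:ℝ) < t - z := by linarith [ht.1]
          have h2 : (f t - f z) / (t - z) ≤ -ε := by
            rw [div_le_iff₀ htz]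
            have h3 : g t < g z := by rw [hgz]; exact h1
            simp only [hgdef] at h3
            nlinarith
          have hcast : ((f t : EReal) - (f z : EReal)) / ((t : EReal) - (z : EReal))
              = (((f t - f z) / (t - z) : ℝ) : EReal) := by
            rw [← EReal.coe_sub, ← EReal.coe_sub, ← EReal.coe_div]
          rw [hcast]
          exact EReal.coe_le_coe_iff.2 h2
        have hle : l ≤ ((-ε : ℝ) : EReal) := le_of_tendsto hlim hev
        have : l < 0 := lt_of_le_of_lt hle (by exact_mod_cast neg_neg_iff_pos.2 hε)
        exact absurd hl0 (not_le.2 this)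
      · -- left derivative exists: g < c on a left neighborhood of z
        have hmem : Ioi ((-ε : ℝ) : EReal) ∈ 𝓝 l := by
          refine isOpen_Ioi.mem_nhds ?_
          exact lt_of_lt_of_le (by exact_mod_cast neg_neg_iff_pos.2 hε) hl0
        have hev : ∀ᶠ t in 𝓝[<] z, g t < c := by
          filter_upwards [hlim hmem, self_mem_nhdsWithin] with t ht1 ht2
          have htz : t - z < 0 := by simpa [sub_neg] using (ht2 : t < z)
          have hslope : -ε < (f t - f z) / (t - z) := by
            have hcast : ((f t : EReal) - (f z : EReal)) / ((t : EReal) - (z : EReal))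
                = (((f t - f z) / (t - z) : ℝ) : EReal) := by
              rw [← EReal.coe_sub, ← EReal.coe_sub, ← EReal.coe_div]
            simp only [Set.mem_preimage, Set.mem_Ioi, hcast] at ht1
            exact EReal.coe_lt_coe_iff.1 ht1
          have h4 : f t - f z < -ε * (t - z) := (lt_div_iff_of_neg htz).1 hslope
          have : g t < g z := by simp only [hgdef]; nlinarith
          simpa [hgz] using this
        obtain ⟨u, hu, huz⟩ := mem_nhdsLT_iff_exists_Ioo_subset.1 hev
        have humax : max u x < z := max_lt hu hxltz
        obtain ⟨q, hq1, hq2⟩ := exists_rat_btwn humax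
        refine ⟨q, z, max u x, hq1, hq2, hxltz, hzlty, hgz, ?_, hgt⟩
        intro t h1 h2
        exact huz ⟨lt_of_le_of_lt (le_max_left u x) h1, h2⟩
    -- choose data
    choose! Q Z U hQ1 hQ2 hZ1 hZ2 hgZ hleft hright using main
    have hanti : ∀ c ∈ Ioo (g y) (g x), ∀ c' ∈ Ioo (g y) (g x), c < c' →
        (Q c' : ℝ) < Q c := by
      intro c hc c' hc' hcc
      have hZle : Z c' ≤ U c := by
        by_contra h; push_neg at h
        rcases lt_trichotomy (Z c') (Z c) with h1 | h1 | h1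
        · have := hleft c hc (Z c') h h1
          rw [hgZ c' hc'] at this
          exact absurd this (not_lt.2 hcc.le)
        · have : c = c' := by rw [← hgZ c hc, ← hgZ c' hc', h1]
          exact absurd this (ne_of_lt hcc)
        · have := hright c hc (Z c') h1 (hZ2 c' hc').le
          rw [hgZ c' hc'] at this
          exact absurd this (not_lt.2 hcc.le)
      calc (Q c' : ℝ) < Z c' := hQ2 c' hc'
        _ ≤ U c := hZle
        _ < Q c := hQ1 c hc
    have hinj : Set.InjOn Q (Ioo (g y) (g x)) := by
      intro c hc c' hc' hqq
      by_contra hne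
      rcases lt_or_gt_of_ne hne with h | h
      · have h2 := hanti c hc c' hc' h
        rw [hqq] at h2; exact lt_irrefl _ h2
      · have h2 := hanti c' hc' c hc h
        rw [hqq] at h2; exact lt_irrefl _ h2
    have hcnt : (Ioo (g y) (g x)).Countable :=
      Set.countable_of_injective_of_countable_image hinj (Set.to_countable _)
    have := Cardinal.le_aleph0_iff_set_countable.2 hcnt
    rw [Cardinal.mk_Ioo_real hgyx] at this
    exact absurd this (not_le.2 Cardinal.aleph0_lt_continuum)
  -- conclude monotonicity
  intro x hx y hy hxy
  rcases eq_or_lt_of_le hxy with rfl | hlt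
  · exact le_refl _
  have hall : ∀ ε : ℝ, 0 < ε → f x ≤ f y + ε * (y - x) := by
    intro ε hε
    have := key ε hε x hx y hy hlt
    linarith
  by_contra h'
  push_neg at h'
  have hε : 0 < (f x - f y) / (2 * (y - x)) := by
    apply div_pos (by linarith) (by linarith)
  have h2 := hall _ hε
  have h3 : (f x - f y) / (2 * (y - x)) * (y - x) = (f x - f y) / 2 := by
    have hyx : y - x ≠ 0 := sub_ne_zero.2 (ne_of_gt hlt)
    field_simp
  rw [h3] at h2
  linarith
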